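/- Variance of the RS+FD[OUE-z] estimator (Theorem 'variance_oue_z'): let d ≥ 1 be an integer, p, q ∈ [0,1] with p ≠ q, let n be a positive integer, let 0 ≤ f ≤ 1, and set γ = (1/d)·(d·q + f·(p−q)) (the marginal probability that a user reports bit 1 for v when each user independently holds v with probability f under the RS+FD[OUE-z] mechanism). If N is the sum of n i.i.d. Bernoulli(γ) indicator random variables, then the estimator f̂ = d·(N − n·q)/(n·(p−q)) has variance Var(f̂) = d²·γ·(1−γ)/(n·(p−q)²). -/

import Mathlib

open MeasureTheory ProbabilityTheory

private lemma var_add_const {Ω : Type*} {m : MeasurableSpace Ω} {μ : Measure Ω}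
    [IsProbabilityMeasure μ] {X : Ω → ℝ} (hX : Integrable X μ) (c : ℝ) :
    variance (fun ω => X ω + c) μ = variance X μ := by
  have h : (∫ ω, (X ω + c) ∂μ) = (∫ ω, X ω ∂μ) + c := by
    rw [integral_add hX (integrable_const c), integral_const]; simp
  simp only [variance, evariance, h]
  congr 1
  refine lintegral_congr fun ω => ?_
  congr 2
  ring

/-- Variance of the RS+FD[OUE-z] estimator (Theorem `variance_oue_z`). -/
theorem variance_oue_z
    {Ω : Type*} [MeasureSpace Ω] [IsProbabilityMeasure (ℙ : Measure Ω)]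
    (d : ℕ) (hd : 1 ≤ d)
    (p q : ℝ) (hp : 0 ≤ p ∧ p ≤ 1) (hq : 0 ≤ q ∧ q ≤ 1) (hpq : p ≠ q)
    (n : ℕ) (hn : 0 < n)
    (f : ℝ) (hf0 : 0 ≤ f) (hf1 : f ≤ 1)
    (γ : ℝ) (hγ : γ = (1 / (d : ℝ)) * ((d : ℝ) * q + f * (p - q)))
    (X : Fin n → Ω → Bool)
    (hmeas : ∀ i, Measurable (X i))
    (hindep : iIndepFun X ℙ)
    (hbern : ∀ i, ℙ {ω | X i ω = true} = ENNReal.ofReal γ) :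
    variance (fun ω =>
        (d : ℝ) * ((∑ i, if X i ω then (1 : ℝ) else 0) - (n : ℝ) * q)
          / ((n : ℝ) * (p - q))) ℙ
      = (d : ℝ) ^ 2 * γ * (1 - γ) / ((n : ℝ) * (p - q) ^ 2) := by
  have hd' : (1 : ℝ) ≤ (d : ℝ) := by exact_mod_cast hd
  have hdpos : (0 : ℝ) < (d : ℝ) := by linarith
  have hn' : (0 : ℝ) < (n : ℝ) := by exact_mod_cast hn
  have hγ' : γ * (d : ℝ) = (d : ℝ) * q + f * (p - q) := by
    rw [hγ]; field_simp
  have hγ0 : 0 ≤ γ := by nlinarith [hp.1, hq.1, mul_nonneg hf0 hp.1]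
  have hγ1 : γ ≤ 1 := by nlinarith [hp.2, hq.2]
  set Y : Fin n → Ω → ℝ := fun i ω => if X i ω then 1 else 0 with hY
  have hYmeas : ∀ i, Measurable (Y i) := fun i =>
    (measurable_from_top (f := fun b : Bool => if b then (1:ℝ) else 0)).comp (hmeas i)
  have hYsq : ∀ i, (Y i) ^ 2 = Y i := by
    intro i; funext ω; simp only [hY, Pi.pow_apply]
    by_cases h : X i ω <;> simp [h]
  have hYmem : ∀ i, MemLp (Y i) 2 ℙ := by
    intro i
    refine memLp_of_bounded (a := 0) (b := 1) (Filter.Eventually.of_forall fun ω => ?_)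
      (hYmeas i).aestronglyMeasurable 2
    by_cases h : X i ω <;> simp [hY, h]
  have hYint : ∀ i, (∫ ω, Y i ω ∂ℙ) = γ := by
    intro i
    have hA : MeasurableSet {ω | X i ω = true} := hmeas i (measurableSet_singleton true)
    have : Y i = Set.indicator {ω | X i ω = true} (fun _ => (1:ℝ)) := by
      funext ω
      by_cases h : X i ω <;> simp [hY, h, Set.indicator, Set.mem_setOf_eq]
    rw [this, integral_indicator_const (1:ℝ) hA, measureReal_def, hbern i, smul_eq_mul, mul_one,
      ENNReal.toReal_ofReal hγ0]
  have hYvar : ∀ i, variance (Y i) ℙ = γ * (1 - γ) := by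
    intro i
    rw [variance_eq_sub (hYmem i), hYsq i, hYint i]
    ring
  -- pairwise independence
  have hpair : Set.Pairwise ↑(Finset.univ : Finset (Fin n))
      fun i j => IndepFun (Y i) (Y j) ℙ := by
    intro i _ j _ hij
    exact (hindep.indepFun hij).comp
      (measurable_from_top (f := fun b : Bool => if b then (1:ℝ) else 0))
      (measurable_from_top (f := fun b : Bool => if b then (1:ℝ) else 0))
  have hvarsum : variance (∑ i, Y i) ℙ = (n : ℝ) * (γ * (1 - γ)) := by
    rw [IndepFun.variance_sum (fun i _ => hYmem i) hpair]
    simp [hYvar]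
  set c : ℝ := (d : ℝ) / ((n : ℝ) * (p - q)) with hc
  set b : ℝ := -((d : ℝ) * ((n : ℝ) * q) / ((n : ℝ) * (p - q))) with hb
  have hfun : (fun ω =>
        (d : ℝ) * ((∑ i, if X i ω then (1 : ℝ) else 0) - (n : ℝ) * q)
          / ((n : ℝ) * (p - q)))
      = fun ω => c * (∑ i, Y i) ω + b := by
    funext ω
    simp only [hc, hb, Finset.sum_apply, hY]
    ring
  have hSint : Integrable (fun ω => c * (∑ i, Y i) ω) ℙ := by
    apply Integrable.const_mul
    exact (memLp_finset_sum' _ fun i _ => hYmem i).integrable (by norm_num)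
  rw [hfun, var_add_const hSint b, variance_const_mul c (∑ i, Y i) ℙ, hvarsum]
  have hpq' : p - q ≠ 0 := sub_ne_zero.mpr hpq
  rw [hc]
  field_simp
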